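/- Let M ∈ ℝ^{3×3} with singular value decomposition M = UΣVᵀ where U, V are orthogonal and Σ = diag(σ₁, σ₂, σ₃) with σ₁ ≥ σ₂ ≥ σ₃ ≥ 0. If σ₂ > 0 (so M has rank ≥ 2), then arg min over R ∈ SO(3) of ‖R − M‖² (Frobenius norm) is attained at R* = U·diag(1, 1, det(UVᵀ))·Vᵀ, and this minimizer is unique when σ₂ + σ₃·det(UVᵀ) > 0. -/
import Mathlib


open Matrix

/-- The squared Frobenius norm of a `3 × 3` real matrix. -/
def frob2 (A : Matrix (Fin 3) (Fin 3) ℝ) : ℝ := ∑ i : Fin 3, ∑ j : Fin 3, (A i j) ^ 2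

set_option maxHeartbeats 1000000


lemma orth_eqs (Q : Matrix (Fin 3) (Fin 3) ℝ) (hQ : Qᵀ * Q = 1) :
    (Q 0 0 * Q 0 0 + Q 1 0 * Q 1 0 + Q 2 0 * Q 2 0 = 1) ∧
    (Q 0 1 * Q 0 1 + Q 1 1 * Q 1 1 + Q 2 1 * Q 2 1 = 1) ∧
    (Q 0 2 * Q 0 2 + Q 1 2 * Q 1 2 + Q 2 2 * Q 2 2 = 1) ∧
    (Q 0 0 * Q 0 1 + Q 1 0 * Q 1 1 + Q 2 0 * Q 2 1 = 0) ∧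
    (Q 0 0 * Q 0 2 + Q 1 0 * Q 1 2 + Q 2 0 * Q 2 2 = 0) ∧
    (Q 0 1 * Q 0 2 + Q 1 1 * Q 1 2 + Q 2 1 * Q 2 2 = 0) := by
  have h : ∀ k l : Fin 3, (Qᵀ * Q) k l = (1 : Matrix (Fin 3) (Fin 3) ℝ) k l := by
    intro k l; rw [hQ]
  refine ⟨?_, ?_, ?_, ?_, ?_, ?_⟩
  · have := h 0 0; simpa [Matrix.mul_apply, Fin.sum_univ_three, Matrix.one_apply] using this
  · have := h 1 1; simpa [Matrix.mul_apply, Fin.sum_univ_three, Matrix.one_apply] using this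
  · have := h 2 2; simpa [Matrix.mul_apply, Fin.sum_univ_three, Matrix.one_apply] using this
  · have := h 0 1; simpa [Matrix.mul_apply, Fin.sum_univ_three, Matrix.one_apply] using this
  · have := h 0 2; simpa [Matrix.mul_apply, Fin.sum_univ_three, Matrix.one_apply] using this
  · have := h 1 2; simpa [Matrix.mul_apply, Fin.sum_univ_three, Matrix.one_apply] using this

lemma trace_le_one (Q : Matrix (Fin 3) (Fin 3) ℝ) (hQ : Qᵀ * Q = 1) (hd : Q.det = -1) :
    Q 0 0 + Q 1 1 + Q 2 2 ≤ 1 := by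
  obtain ⟨c1, c2, c3, c4, c5, c6⟩ := orth_eqs Q hQ
  rw [Matrix.det_fin_three] at hd
  have key : (1 - (Q 0 0 + Q 1 1 + Q 2 2)) * (3 + (Q 0 0 + Q 1 1 + Q 2 2))
      = (Q 1 0 - Q 0 1) ^ 2 + (Q 0 2 - Q 2 0) ^ 2 + (Q 2 1 - Q 1 2) ^ 2 := by
    linear_combination
      (-1 + 2 * (Q 1 1 * Q 2 2 - Q 1 2 * Q 2 1)) * c1 +
      (-1 + 2 * (Q 0 0 * Q 2 2 - Q 0 2 * Q 2 0)) * c2 +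
      (-1 + 2 * (Q 0 0 * Q 1 1 - Q 0 1 * Q 1 0)) * c3 +
      2 * (-(Q 1 0 * Q 2 2 - Q 1 2 * Q 2 0) + -(Q 0 1 * Q 2 2 - Q 0 2 * Q 2 1)) * c4 +
      2 * ((Q 1 0 * Q 2 1 - Q 1 1 * Q 2 0) + (Q 0 1 * Q 1 2 - Q 0 2 * Q 1 1)) * c5 +
      2 * (-(Q 0 0 * Q 2 1 - Q 0 1 * Q 2 0) + -(Q 0 0 * Q 1 2 - Q 0 2 * Q 1 0)) * c6 +
      (-2 * (Q 0 0 + Q 1 1 + Q 2 2)) * hd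
  have ha : -1 ≤ Q 0 0 := by nlinarith [sq_nonneg (Q 0 0 + 1), sq_nonneg (Q 1 0), sq_nonneg (Q 2 0)]
  have he : -1 ≤ Q 1 1 := by nlinarith [sq_nonneg (Q 1 1 + 1), sq_nonneg (Q 0 1), sq_nonneg (Q 2 1)]
  have hi : -1 ≤ Q 2 2 := by nlinarith [sq_nonneg (Q 2 2 + 1), sq_nonneg (Q 0 2), sq_nonneg (Q 1 2)]
  by_contra hcon
  push_neg at hcon
  have h3 : (0:ℝ) < 3 + (Q 0 0 + Q 1 1 + Q 2 2) := by linarith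
  have hneg : (1 - (Q 0 0 + Q 1 1 + Q 2 2)) * (3 + (Q 0 0 + Q 1 1 + Q 2 2)) < 0 :=
    mul_neg_of_neg_of_pos (by linarith) h3
  nlinarith [sq_nonneg (Q 1 0 - Q 0 1), sq_nonneg (Q 0 2 - Q 2 0), sq_nonneg (Q 2 1 - Q 1 2)]

lemma det_pm_one (Q : Matrix (Fin 3) (Fin 3) ℝ) (hQ : Qᵀ * Q = 1) :
    Q.det = 1 ∨ Q.det = -1 := by
  have h := congrArg Matrix.det hQ
  rw [Matrix.det_mul, Matrix.det_transpose, Matrix.det_one] at h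
  exact mul_self_eq_one_iff.mp h

lemma procrustes_ineq (σ0 σ1 σ2 : ℝ) (h01 : σ1 ≤ σ0) (h12 : σ2 ≤ σ1) (h2 : 0 ≤ σ2)
    (Q : Matrix (Fin 3) (Fin 3) ℝ) (hQ : Qᵀ * Q = 1) :
    σ0 * Q 0 0 + σ1 * Q 1 1 + σ2 * Q 2 2 ≤ σ0 + σ1 + Q.det * σ2 := by
  obtain ⟨c1, c2, c3, c4, c5, c6⟩ := orth_eqs Q hQ
  have ha1 : Q 0 0 ≤ 1 := by nlinarith [sq_nonneg (Q 0 0 - 1), sq_nonneg (Q 1 0), sq_nonneg (Q 2 0)]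
  have he1 : Q 1 1 ≤ 1 := by nlinarith [sq_nonneg (Q 1 1 - 1), sq_nonneg (Q 0 1), sq_nonneg (Q 2 1)]
  have hi1 : Q 2 2 ≤ 1 := by nlinarith [sq_nonneg (Q 2 2 - 1), sq_nonneg (Q 0 2), sq_nonneg (Q 1 2)]
  rcases det_pm_one Q hQ with hd | hd <;> rw [hd]
  · nlinarith [mul_nonneg (sub_nonneg.mpr h01) (sub_nonneg.mpr ha1),
      mul_nonneg (sub_nonneg.mpr h12) (by linarith : (0:ℝ) ≤ 2 - Q 0 0 - Q 1 1),
      mul_nonneg h2 (by linarith : (0:ℝ) ≤ 3 - Q 0 0 - Q 1 1 - Q 2 2)]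
  · have htr := trace_le_one Q hQ hd
    nlinarith [mul_nonneg (sub_nonneg.mpr h01) (sub_nonneg.mpr ha1),
      mul_nonneg (sub_nonneg.mpr h12) (by linarith : (0:ℝ) ≤ 2 - Q 0 0 - Q 1 1),
      mul_nonneg h2 (by linarith : (0:ℝ) ≤ 1 - Q 0 0 - Q 1 1 - Q 2 2)]

lemma procrustes_eq (σ0 σ1 σ2 : ℝ) (h01 : σ1 ≤ σ0) (h12 : σ2 ≤ σ1) (h2 : 0 ≤ σ2)
    (h1p : 0 < σ1) (Q : Matrix (Fin 3) (Fin 3) ℝ) (hQ : Qᵀ * Q = 1)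
    (hpos : 0 < σ1 + σ2 * Q.det)
    (heq : σ0 * Q 0 0 + σ1 * Q 1 1 + σ2 * Q 2 2 = σ0 + σ1 + Q.det * σ2) :
    Q = Matrix.diagonal ![1, 1, Q.det] := by
  obtain ⟨c1, c2, c3, c4, c5, c6⟩ := orth_eqs Q hQ
  have hQ' : (Qᵀ)ᵀ * Qᵀ = 1 := by
    rw [Matrix.transpose_transpose]; exact mul_eq_one_comm.mp hQ
  obtain ⟨r1, r2, r3, r4, r5, r6⟩ := orth_eqs Qᵀ hQ'
  simp only [Matrix.transpose_apply] at r1 r2 r3 r4 r5 r6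
  have h0p : 0 < σ0 := lt_of_lt_of_le h1p h01
  have ha1 : Q 0 0 ≤ 1 := by nlinarith [sq_nonneg (Q 0 0 - 1), sq_nonneg (Q 1 0), sq_nonneg (Q 2 0)]
  have he1 : Q 1 1 ≤ 1 := by nlinarith [sq_nonneg (Q 1 1 - 1), sq_nonneg (Q 0 1), sq_nonneg (Q 2 1)]
  have hi1 : Q 2 2 ≤ 1 := by nlinarith [sq_nonneg (Q 2 2 - 1), sq_nonneg (Q 0 2), sq_nonneg (Q 1 2)]
  have haE : Q 0 0 = 1 ∧ Q 1 1 = 1 := by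
    rcases det_pm_one Q hQ with hd | hd <;> rw [hd] at heq hpos
    · constructor
      · refine le_antisymm ha1 ?_
        nlinarith [mul_nonneg (le_of_lt h1p) (sub_nonneg.mpr he1),
          mul_nonneg h2 (sub_nonneg.mpr hi1)]
      · refine le_antisymm he1 ?_
        nlinarith [mul_nonneg (le_of_lt h0p) (sub_nonneg.mpr ha1),
          mul_nonneg h2 (sub_nonneg.mpr hi1)]
    · have htr := trace_le_one Q hQ hd
      have h12p : 0 < σ1 - σ2 := by linarith
      have hsum : 2 ≤ Q 0 0 + Q 1 1 := by
        nlinarith [mul_nonneg (sub_nonneg.mpr h01) (sub_nonneg.mpr ha1),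
          mul_nonneg h2 (by linarith : (0:ℝ) ≤ 1 - Q 0 0 - Q 1 1 - Q 2 2)]
      exact ⟨le_antisymm ha1 (by linarith), le_antisymm he1 (by linarith)⟩
  obtain ⟨ha, he⟩ := haE
  have hzero : ∀ x y : ℝ, x * x + y * y = 0 → x = 0 := by
    intro x y h
    have hx : x * x = 0 := le_antisymm (by nlinarith [mul_self_nonneg y]) (mul_self_nonneg x)
    exact mul_self_eq_zero.mp hx
  have h10 : Q 1 0 = 0 := hzero _ (Q 2 0) (by linear_combination c1 - (Q 0 0 + 1) * ha)
  have h20 : Q 2 0 = 0 := hzero _ (Q 1 0) (by linear_combination c1 - (Q 0 0 + 1) * ha)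
  have h01' : Q 0 1 = 0 := hzero _ (Q 0 2) (by linear_combination r1 - (Q 0 0 + 1) * ha)
  have h02 : Q 0 2 = 0 := hzero _ (Q 0 1) (by linear_combination r1 - (Q 0 0 + 1) * ha)
  have h21 : Q 2 1 = 0 := hzero _ (Q 0 1) (by linear_combination c2 - (Q 1 1 + 1) * he)
  have h12' : Q 1 2 = 0 := hzero _ (Q 1 0) (by linear_combination r2 - (Q 1 1 + 1) * he)
  have hi : Q 2 2 = Q.det := by
    rw [Matrix.det_fin_three, ha, he, h10, h20, h01', h02, h21, h12']; ring
  funext i j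
  fin_cases i <;> fin_cases j <;>
    simp [Matrix.diagonal, ha, he, h10, h20, h01', h02, h21, h12', hi]

lemma frob2_expand (A B : Matrix (Fin 3) (Fin 3) ℝ) :
    frob2 (A - B) = frob2 A - 2 * Matrix.trace (Aᵀ * B) + frob2 B := by
  simp [frob2, Matrix.trace, Matrix.diag, Matrix.mul_apply, Matrix.sub_apply,
    Fin.sum_univ_three]
  ring

lemma frob2_of_orth (R : Matrix (Fin 3) (Fin 3) ℝ) (hR : Rᵀ * R = 1) : frob2 R = 3 := by
  have h : Matrix.trace (Rᵀ * R) = frob2 R := by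
    simp [frob2, Matrix.trace, Matrix.diag, Matrix.mul_apply, Fin.sum_univ_three]
    ring
  rw [← h, hR, Matrix.trace_one]
  norm_num

lemma trace_transpose_mul_diag (N : Matrix (Fin 3) (Fin 3) ℝ) (σ : Fin 3 → ℝ) :
    Matrix.trace (Nᵀ * Matrix.diagonal σ) = σ 0 * N 0 0 + σ 1 * N 1 1 + σ 2 * N 2 2 := by
  simp [Matrix.trace, Matrix.diag, Matrix.mul_apply, Matrix.diagonal, Fin.sum_univ_three]
  ring

theorem stmt19 (U V : Matrix (Fin 3) (Fin 3) ℝ) (σ : Fin 3 → ℝ)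
    (hU : Uᵀ * U = 1) (hV : Vᵀ * V = 1)
    (hσ01 : σ 1 ≤ σ 0) (hσ12 : σ 2 ≤ σ 1) (hσ2 : 0 ≤ σ 2) (hσ1pos : 0 < σ 1)
    (M : Matrix (Fin 3) (Fin 3) ℝ) (hM : M = U * Matrix.diagonal σ * Vᵀ)
    (Rstar : Matrix (Fin 3) (Fin 3) ℝ)
    (hRstar : Rstar = U * Matrix.diagonal ![1, 1, (U * Vᵀ).det] * Vᵀ) :
    (Rstarᵀ * Rstar = 1 ∧ Rstar.det = 1) ∧
    (∀ R : Matrix (Fin 3) (Fin 3) ℝ, Rᵀ * R = 1 → R.det = 1 →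
      frob2 (Rstar - M) ≤ frob2 (R - M)) ∧
    (0 < σ 1 + σ 2 * (U * Vᵀ).det →
      ∀ R : Matrix (Fin 3) (Fin 3) ℝ, Rᵀ * R = 1 → R.det = 1 →
        frob2 (R - M) = frob2 (Rstar - M) → R = Rstar) := by
  have hUU : U * Uᵀ = 1 := mul_eq_one_comm.mp hU
  have hVV : V * Vᵀ = 1 := mul_eq_one_comm.mp hV
  have hdU : U.det * U.det = 1 := by
    have := congrArg Matrix.det hU
    rwa [Matrix.det_mul, Matrix.det_transpose, Matrix.det_one] at this
  have hdV : V.det * V.det = 1 := by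
    have := congrArg Matrix.det hV
    rwa [Matrix.det_mul, Matrix.det_transpose, Matrix.det_one] at this
  have heUV : (U * Vᵀ).det = U.det * V.det := by
    rw [Matrix.det_mul, Matrix.det_transpose]
  have he2 : (U * Vᵀ).det * (U * Vᵀ).det = 1 := by
    rw [heUV]; linear_combination (V.det * V.det) * hdU + hdV
  have cU : ∀ X : Matrix (Fin 3) (Fin 3) ℝ, Uᵀ * (U * X) = X := fun X => by
    rw [← Matrix.mul_assoc, hU, Matrix.one_mul]
  have cU' : ∀ X : Matrix (Fin 3) (Fin 3) ℝ, U * (Uᵀ * X) = X := fun X => by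
    rw [← Matrix.mul_assoc, hUU, Matrix.one_mul]
  have he2' : U.det * V.det * (U.det * V.det) = 1 := by
    linear_combination (V.det * V.det) * hdU + hdV
  have hDD : Matrix.diagonal ![(1:ℝ), 1, (U * Vᵀ).det] * Matrix.diagonal ![(1:ℝ), 1, (U * Vᵀ).det] = 1 := by
    ext i j
    fin_cases i <;> fin_cases j <;>
      simp [Matrix.mul_apply, Fin.sum_univ_three, Matrix.diagonal, Matrix.one_apply, he2, he2']
  have hDT : (Matrix.diagonal ![(1:ℝ), 1, (U * Vᵀ).det])ᵀ = Matrix.diagonal ![(1:ℝ), 1, (U * Vᵀ).det] :=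
    Matrix.diagonal_transpose _
  have hRo : Rstarᵀ * Rstar = 1 := by
    rw [hRstar]
    simp only [Matrix.transpose_mul, Matrix.transpose_transpose, Matrix.mul_assoc, hDT]
    rw [cU]
    rw [show Matrix.diagonal ![(1:ℝ), 1, (U * Vᵀ).det] * (Matrix.diagonal ![(1:ℝ), 1, (U * Vᵀ).det] * Vᵀ) = Vᵀ by
      rw [← Matrix.mul_assoc, hDD, Matrix.one_mul]]
    exact hVV
  have hRd : Rstar.det = 1 := by
    rw [hRstar, Matrix.det_mul, Matrix.det_mul, Matrix.det_transpose, Matrix.det_diagonal,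
      Fin.prod_univ_three]
    simp only [Matrix.cons_val_zero, Matrix.cons_val_one, Matrix.head_cons]
    rw [show (![(1:ℝ), 1, (U * Vᵀ).det] 2) = (U * Vᵀ).det by simp, heUV]
    linear_combination (V.det * V.det) * hdU + hdV
  have htrace : ∀ S : Matrix (Fin 3) (Fin 3) ℝ, Matrix.trace (Sᵀ * M)
      = σ 0 * (Uᵀ * S * V) 0 0 + σ 1 * (Uᵀ * S * V) 1 1 + σ 2 * (Uᵀ * S * V) 2 2 := by
    intro S
    rw [hM]
    have h1 : Sᵀ * (U * Matrix.diagonal σ * Vᵀ) = (Sᵀ * U * Matrix.diagonal σ) * Vᵀ := by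
      simp [Matrix.mul_assoc]
    rw [h1, Matrix.trace_mul_comm]
    have h2 : Vᵀ * (Sᵀ * U * Matrix.diagonal σ) = (Uᵀ * S * V)ᵀ * Matrix.diagonal σ := by
      simp [Matrix.transpose_mul, Matrix.transpose_transpose, Matrix.mul_assoc]
    rw [h2, trace_transpose_mul_diag]
  have hQstar : Uᵀ * Rstar * V = Matrix.diagonal ![(1:ℝ), 1, (U * Vᵀ).det] := by
    rw [hRstar]
    simp only [Matrix.mul_assoc]
    rw [show Vᵀ * V = 1 from hV, Matrix.mul_one, cU]
  have htrRstar : Matrix.trace (Rstarᵀ * M) = σ 0 + σ 1 + (U * Vᵀ).det * σ 2 := by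
    rw [htrace Rstar, hQstar]
    simp [Matrix.diagonal]
    ring
  refine ⟨⟨hRo, hRd⟩, ?_, ?_⟩
  · intro R hR hRdet
    have hQo : (Uᵀ * R * V)ᵀ * (Uᵀ * R * V) = 1 := by
      have cR : ∀ X : Matrix (Fin 3) (Fin 3) ℝ, Rᵀ * (R * X) = X := fun X => by
        rw [← Matrix.mul_assoc, hR, Matrix.one_mul]
      simp only [Matrix.transpose_mul, Matrix.transpose_transpose, Matrix.mul_assoc]
      rw [cU', cR]
      exact hV
    have hQdet : (Uᵀ * R * V).det = (U * Vᵀ).det := by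
      rw [Matrix.det_mul, Matrix.det_mul, Matrix.det_transpose, hRdet, heUV]; ring
    have hineq := procrustes_ineq (σ 0) (σ 1) (σ 2) hσ01 hσ12 hσ2 (Uᵀ * R * V) hQo
    rw [hQdet] at hineq
    rw [frob2_expand, frob2_expand, frob2_of_orth R hR, frob2_of_orth Rstar hRo,
      htrRstar, htrace R]
    nlinarith [hineq]
  · intro hpos R hR hRdet hfeq
    have hQo : (Uᵀ * R * V)ᵀ * (Uᵀ * R * V) = 1 := by
      have cR : ∀ X : Matrix (Fin 3) (Fin 3) ℝ, Rᵀ * (R * X) = X := fun X => by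
        rw [← Matrix.mul_assoc, hR, Matrix.one_mul]
      simp only [Matrix.transpose_mul, Matrix.transpose_transpose, Matrix.mul_assoc]
      rw [cU', cR]
      exact hV
    have hQdet : (Uᵀ * R * V).det = (U * Vᵀ).det := by
      rw [Matrix.det_mul, Matrix.det_mul, Matrix.det_transpose, hRdet, heUV]; ring
    rw [frob2_expand, frob2_expand, frob2_of_orth R hR, frob2_of_orth Rstar hRo,
      htrRstar, htrace R] at hfeq
    have heq : σ 0 * (Uᵀ * R * V) 0 0 + σ 1 * (Uᵀ * R * V) 1 1 + σ 2 * (Uᵀ * R * V) 2 2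
        = σ 0 + σ 1 + (Uᵀ * R * V).det * σ 2 := by
      rw [hQdet]; linarith
    have hpos' : 0 < σ 1 + σ 2 * (Uᵀ * R * V).det := by rw [hQdet]; exact hpos
    have hQeq := procrustes_eq (σ 0) (σ 1) (σ 2) hσ01 hσ12 hσ2 hσ1pos
      (Uᵀ * R * V) hQo hpos' heq
    have hRQ : U * (Uᵀ * R * V) * Vᵀ = R := by
      simp only [Matrix.mul_assoc]
      rw [show V * Vᵀ = 1 from hVV, Matrix.mul_one, cU']
    rw [← hRQ, hQeq, hQdet, ← hRstar]
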